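/- Fix g ≥ 1 and indices i, j, k, l, m, n ∈ {1,…,g}, and define (wherever σ ≠ 0) 𝒮_{ijklmn} = ℘_{ijklmn} − 3(℘_{ijk}℘_{lmn} + ℘_{ijl}℘_{kmn} + ℘_{ijm}℘_{kln} + ℘_{ijn}℘_{klm} + ℘_{ikl}℘_{jmn} + ℘_{ikm}℘_{jln} + ℘_{ikn}℘_{jlm} + ℘_{ilm}℘_{jkn} + ℘_{iln}℘_{jkm} + ℘_{imn}℘_{jkl}), the sum running over all ten ways to split the six index positions into two unordered blocks of three. Then there exists a universal polynomial P in the partial derivatives of σ of order at most 6 such that for every infinitely complex-differentiable σ : ℂ^g → ℂ and every u with σ(u) ≠ 0, σ(u)³ · 𝒮_{ijklmn}(u) = P evaluated at the partial derivatives of σ at u. In particular the 𝒮-function, a priori with poles of order six along the zero set of σ, has poles of order at most three there. -/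

import Mathlib

noncomputable section

/-- Partial derivative in the `i`-th coordinate direction. -/
def pd {g : ℕ} (i : Fin g) (f : (Fin g → ℂ) → ℂ) : (Fin g → ℂ) → ℂ :=
  fun u => fderiv ℂ f u (Pi.single i 1)

/-- Iterated partial derivative along a list of coordinate indices. -/
def pdIter {g : ℕ} (l : List (Fin g)) (f : (Fin g → ℂ) → ℂ) : (Fin g → ℂ) → ℂ :=
  l.foldl (fun h i => pd i h) f

/-- The 2-index Kleinian ℘-function ℘_{ij} = (σ_i σ_j − σ σ_{ij}) / σ². -/
def wp2 {g : ℕ} (σ : (Fin g → ℂ) → ℂ) (i j : Fin g) : (Fin g → ℂ) → ℂ :=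
  fun u => (pd i σ u * pd j σ u - σ u * pd j (pd i σ) u) / σ u ^ 2

/-- The m-index Kleinian ℘-function ℘_{i j k₁ ⋯ k_r}, obtained from ℘_{ij} by
successively differentiating with respect to the coordinates in `ks`. -/
def wp {g : ℕ} (σ : (Fin g → ℂ) → ℂ) (i j : Fin g) (ks : List (Fin g)) :
    (Fin g → ℂ) → ℂ :=
  ks.foldl (fun h k => pd k h) (wp2 σ i j)

/-- The 𝒮-function 𝒮_{ijklmn} = ℘_{ijklmn} − 3·Σ ℘_{abc}℘_{def}, the sum over all ten
splittings of the six index positions into two unordered blocks of three. -/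
def Sfun {g : ℕ} (σ : (Fin g → ℂ) → ℂ) (i j k l m n : Fin g) : (Fin g → ℂ) → ℂ :=
  fun u =>
    wp σ i j [k, l, m, n] u - 3 *
      (wp σ i j [k] u * wp σ l m [n] u + wp σ i j [l] u * wp σ k m [n] u
        + wp σ i j [m] u * wp σ k l [n] u + wp σ i j [n] u * wp σ k l [m] u
        + wp σ i k [l] u * wp σ j m [n] u + wp σ i k [m] u * wp σ j l [n] u
        + wp σ i k [n] u * wp σ j l [m] u + wp σ i l [m] u * wp σ j k [n] u
        + wp σ i l [n] u * wp σ j k [m] u + wp σ i m [n] u * wp σ j k [l] u)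

/-! ### Auxiliary machinery -/

/-- Formal expressions in the partial derivatives of `σ`. -/
inductive EE (g : ℕ) where
  | atom : List (Fin g) → EE g
  | const : ℚ → EE g
  | add : EE g → EE g → EE g
  | mul : EE g → EE g → EE g

namespace EE

variable {g : ℕ}

def eval (σ : (Fin g → ℂ) → ℂ) : EE g → (Fin g → ℂ) → ℂ
  | atom B => pdIter B σ
  | const q => fun _ => (q : ℂ)
  | add e₁ e₂ => fun u => eval σ e₁ u + eval σ e₂ u
  | mul e₁ e₂ => fun u => eval σ e₁ u * eval σ e₂ u

def D (a : Fin g) : EE g → EE g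
  | atom B => atom (B ++ [a])
  | const _ => const 0
  | add e₁ e₂ => add (D a e₁) (D a e₂)
  | mul e₁ e₂ => add (mul (D a e₁) e₂) (mul e₁ (D a e₂))

def ok : EE g → Prop
  | atom B => B.length ≤ 6
  | const _ => True
  | add e₁ e₂ => ok e₁ ∧ ok e₂
  | mul e₁ e₂ => ok e₁ ∧ ok e₂

def toPoly : EE g → MvPolynomial {α : List (Fin g) // α.length ≤ 6} ℚ
  | atom B => if h : B.length ≤ 6 then MvPolynomial.X ⟨B, h⟩ else 0
  | const q => MvPolynomial.C q
  | add e₁ e₂ => toPoly e₁ + toPoly e₂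
  | mul e₁ e₂ => toPoly e₁ * toPoly e₂

end EE

section lemmas

variable {g : ℕ}

lemma pdIter_nil (σ : (Fin g → ℂ) → ℂ) : pdIter [] σ = σ := rfl

lemma pdIter_cons (σ : (Fin g → ℂ) → ℂ) (a : Fin g) (B : List (Fin g)) :
    pdIter (a :: B) σ = pdIter B (pd a σ) := rfl

lemma pdIter_append (σ : (Fin g → ℂ) → ℂ) (B : List (Fin g)) (a : Fin g) :
    pdIter (B ++ [a]) σ = pd a (pdIter B σ) := by
  simp [pdIter, List.foldl_append]

lemma pd_contDiff {F : (Fin g → ℂ) → ℂ} (hF : ContDiff ℂ ⊤ F) (a : Fin g) :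
    ContDiff ℂ ⊤ (pd a F) :=
  (hF.fderiv_right le_top).clm_apply contDiff_const

lemma pdIter_contDiff {F : (Fin g → ℂ) → ℂ} (hF : ContDiff ℂ ⊤ F) :
    ∀ B : List (Fin g), ContDiff ℂ ⊤ (pdIter B F) := by
  intro B
  induction B generalizing F with
  | nil => exact hF
  | cons a B ih => exact ih (pd_contDiff hF a)

lemma pd_contDiffAt {F : (Fin g → ℂ) → ℂ} {u : Fin g → ℂ}
    (hF : ContDiffAt ℂ ⊤ F u) (a : Fin g) : ContDiffAt ℂ ⊤ (pd a F) u :=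
  (hF.fderiv_right le_top).clm_apply contDiffAt_const

lemma pdIter_contDiffAt {F : (Fin g → ℂ) → ℂ} {u : Fin g → ℂ}
    (hF : ContDiffAt ℂ ⊤ F u) : ∀ B : List (Fin g), ContDiffAt ℂ ⊤ (pdIter B F) u := by
  intro B
  induction B generalizing F with
  | nil => exact hF
  | cons a B ih => exact ih (pd_contDiffAt hF a)

lemma pd_congr {F G : (Fin g → ℂ) → ℂ} {U : Set (Fin g → ℂ)} (hU : IsOpen U)
    (h : Set.EqOn F G U) {u : Fin g → ℂ} (hu : u ∈ U) (a : Fin g) :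
    pd a F u = pd a G u := by
  unfold pd
  rw [Filter.EventuallyEq.fderiv_eq (Filter.eventuallyEq_of_mem (hU.mem_nhds hu) h)]

lemma pd_add {F G : (Fin g → ℂ) → ℂ} {u : Fin g → ℂ}
    (hF : DifferentiableAt ℂ F u) (hG : DifferentiableAt ℂ G u) (a : Fin g) :
    pd a (fun v => F v + G v) u = pd a F u + pd a G u := by
  unfold pd; rw [fderiv_fun_add hF hG]; simp

lemma pd_mul {F G : (Fin g → ℂ) → ℂ} {u : Fin g → ℂ}
    (hF : DifferentiableAt ℂ F u) (hG : DifferentiableAt ℂ G u) (a : Fin g) :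
    pd a (fun v => F v * G v) u = pd a F u * G u + F u * pd a G u := by
  unfold pd; rw [fderiv_fun_mul hF hG]; simp; ring

lemma pd_neg {F : (Fin g → ℂ) → ℂ} {u : Fin g → ℂ} (a : Fin g) :
    pd a (fun v => -F v) u = - pd a F u := by
  unfold pd; rw [fderiv_fun_neg]; simp

lemma pd_const {u : Fin g → ℂ} (c : ℂ) (a : Fin g) :
    pd a (fun _ => c) u = 0 := by
  unfold pd; rw [fderiv_fun_const]; simp

lemma pd_pow {F : (Fin g → ℂ) → ℂ} (hF : Differentiable ℂ F) (a : Fin g) :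
    ∀ (m : ℕ) (u : Fin g → ℂ),
      pd a (fun v => F v ^ (m + 1)) u = (m + 1) * F u ^ m * pd a F u := by
  intro m
  induction m with
  | zero => intro u; simp [pow_one]
  | succ m ih =>
    intro u
    have : (fun v => F v ^ (m + 2)) = fun v => F v ^ (m + 1) * F v := by
      funext v; ring
    rw [this, pd_mul (F := fun v => F v ^ (m + 1)) ((hF.pow _).differentiableAt) (hF.differentiableAt), ih]
    push_cast
    ring

lemma eval_differentiable {σ : (Fin g → ℂ) → ℂ} (hσ : ContDiff ℂ ⊤ σ) :
    ∀ e : EE g, Differentiable ℂ (e.eval σ) := by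
  intro e
  induction e with
  | atom B => exact (pdIter_contDiff hσ B).differentiable (by simp)
  | const q => exact differentiable_const _
  | add e₁ e₂ ih₁ ih₂ => exact ih₁.add ih₂
  | mul e₁ e₂ ih₁ ih₂ => exact ih₁.mul ih₂

lemma pd_eval {σ : (Fin g → ℂ) → ℂ} (hσ : ContDiff ℂ ⊤ σ) (a : Fin g) :
    ∀ (e : EE g) (u : Fin g → ℂ), pd a (e.eval σ) u = (e.D a).eval σ u := by
  intro e
  induction e with
  | atom B => intro u; rw [EE.D, EE.eval, EE.eval, pdIter_append]
  | const q => intro u; simp [EE.eval, EE.D, pd_const]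
  | add e₁ e₂ ih₁ ih₂ =>
    intro u
    rw [EE.D, EE.eval, EE.eval,
      pd_add ((eval_differentiable hσ e₁).differentiableAt)
        ((eval_differentiable hσ e₂).differentiableAt), ih₁, ih₂]
  | mul e₁ e₂ ih₁ ih₂ =>
    intro u
    rw [EE.D, EE.eval, EE.eval, EE.eval, EE.eval,
      pd_mul ((eval_differentiable hσ e₁).differentiableAt)
        ((eval_differentiable hσ e₂).differentiableAt), ih₁, ih₂]

lemma aeval_toPoly (σ : (Fin g → ℂ) → ℂ) (u : Fin g → ℂ) :
    ∀ e : EE g, e.ok →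
      MvPolynomial.aeval (fun v : {α : List (Fin g) // α.length ≤ 6} =>
        pdIter v.1 σ u) e.toPoly = e.eval σ u := by
  intro e
  induction e with
  | atom B =>
    intro hok
    simp only [EE.ok] at hok
    rw [EE.toPoly, dif_pos hok]
    simp [EE.eval]
  | const q => intro _; simp [EE.toPoly, EE.eval]
  | add e₁ e₂ ih₁ ih₂ =>
    intro hok
    rw [EE.toPoly, map_add, ih₁ hok.1, ih₂ hok.2, EE.eval]
  | mul e₁ e₂ ih₁ ih₂ =>
    intro hok
    rw [EE.toPoly, map_mul, ih₁ hok.1, ih₂ hok.2, EE.eval]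

/-- The cumulant expression: `σ^R.length * ∂^(R.reverse) log σ = (cum R).eval σ`. -/
def cum : List (Fin g) → EE g
  | [] => .const 1
  | [a] => .atom [a]
  | a :: R => .add (.mul (.atom []) ((cum R).D a))
      (.mul (.const (-(R.length : ℚ))) (.mul (.atom [a]) (cum R)))

theorem cum_spec {σ f : (Fin g → ℂ) → ℂ} (hσ : ContDiff ℂ ⊤ σ) {U : Set (Fin g → ℂ)}
    (hU : IsOpen U) (hσne : ∀ u ∈ U, σ u ≠ 0)
    (hf : ∀ u ∈ U, ContDiffAt ℂ ⊤ f u)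
    (hlog : ∀ (a : Fin g), ∀ u ∈ U, σ u * pd a f u = pd a σ u) :
    ∀ R : List (Fin g), R ≠ [] → ∀ u ∈ U,
      σ u ^ R.length * pdIter R.reverse f u = (cum R).eval σ u := by
  intro R
  induction R with
  | nil => intro h; exact absurd rfl h
  | cons a T ih =>
    match T with
    | [] =>
      intro _ u hu
      have := hlog a u hu
      simpa [cum, EE.eval, pdIter] using this
    | b :: T' =>
      intro _ u hu
      have hT : (b :: T') ≠ [] := by simp
      have ihT := ih hT
      set F1 : (Fin g → ℂ) → ℂ := pdIter (b :: T').reverse f with hF1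
      set t : ℕ := T'.length with ht
      -- rewrite the iterated derivative as pd a of the previous one
      have hrev : (a :: b :: T').reverse = (b :: T').reverse ++ [a] := by simp
      rw [hrev, pdIter_append]
      -- differentiate the identity σ^(t+1) * F1 = eval (cum (b::T'))
      have hEq : Set.EqOn (fun v => σ v ^ (t + 1) * F1 v) ((cum (b :: T')).eval σ) U := by
        intro v hv
        simpa [ht] using ihT v hv
      have hder := pd_congr hU hEq hu a
      have hdF1 : DifferentiableAt ℂ F1 u :=
        ((pdIter_contDiffAt (hf u hu) _).differentiableAt (by simp))
      have hdσ : Differentiable ℂ σ := hσ.differentiable (by simp)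
      rw [pd_mul (F := fun v => σ v ^ (t + 1)) ((hdσ.pow _).differentiableAt) hdF1 a,
        pd_pow hdσ a t u, pd_eval hσ a] at hder
      -- the goal
      have hIHu : σ u ^ (t + 1) * F1 u = (cum (b :: T')).eval σ u := by
        simpa [ht] using ihT u hu
      have hlen : (a :: b :: T').length = t + 2 := by simp [ht]
      rw [hlen]
      have hEvalGoal : (cum (a :: b :: T')).eval σ u
          = σ u * ((cum (b :: T')).D a).eval σ u
            + (-(((t : ℚ) + 1)) : ℚ) * (pdIter [a] σ u * (cum (b :: T')).eval σ u) := by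
        simp [cum, EE.eval, ht, pdIter]
      rw [hEvalGoal]
      have hτ : pdIter [a] σ u = pd a σ u := by simp [pdIter]
      rw [hτ]
      push_cast
      linear_combination (σ u) * hder + (-((t : ℂ) + 1) * pd a σ u) * hIHu

theorem wp_spec {σ f : (Fin g → ℂ) → ℂ} (hσ : ContDiff ℂ ⊤ σ) {U : Set (Fin g → ℂ)}
    (hU : IsOpen U) (hσne : ∀ u ∈ U, σ u ≠ 0)
    (hf : ∀ u ∈ U, ContDiffAt ℂ ⊤ f u)
    (hlog : ∀ (a : Fin g), ∀ u ∈ U, σ u * pd a f u = pd a σ u) :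
    ∀ (a b : Fin g) (ks : List (Fin g)), ∀ u ∈ U,
      wp σ a b ks u = - pdIter (a :: b :: ks) f u := by
  intro a b ks
  induction ks using List.reverseRecOn with
  | nil =>
    intro u hu
    have hc := cum_spec hσ hU hσne hf hlog [b, a] (by simp) u hu
    simp only [cum, EE.eval, EE.D, List.reverse_cons, List.reverse_nil, List.nil_append,
      List.singleton_append, List.length_cons, List.length_nil, pdIter, List.foldl_cons,
      List.foldl_nil] at hc
    have hσu := hσne u hu
    show wp2 σ a b u = _
    rw [wp2]
    simp only [pdIter, List.foldl_cons, List.foldl_nil]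
    rw [div_eq_iff (pow_ne_zero 2 hσu)]
    push_cast at hc
    linear_combination hc
  | append_singleton ks c ihks =>
    intro u hu
    have h1 : wp σ a b (ks ++ [c]) u = pd c (wp σ a b ks) u := by
      simp [wp, List.foldl_append]
    rw [h1, pd_congr hU ihks hu c, pd_neg, ← pdIter_append]
    simp

end lemmas
def EP {g : ℕ} (i j k l m n : Fin g) : EE g :=
  (.add (.add (.add (.add (.add (.add (.add (.add (.add (.add (.add (.add (.add (.add (.add (.add (.add (.add (.add (.add (.add (.add (.add (.add (.add (.add (.add (.add (.add (.add (.add (.add (.add (.add (.add (.add (.add (.add (.add (.add (.add (.add (.add (.add (.add (.add (.add (.add (.add (.add (.add (.add (.add (.add (.add (.add (.add (.add (.add (.add (.add (.add (.add (.add (.add (.add (.add (.add (.add (.add (.add (.add (.add (.add (.add (.add (.add (.add (.add (.add (.add (.add (.add (.add (.add (.add (.add (.add (.add (.add (.add (.add (.add (.add (.add (.add (.add (.add (.add (.add (.add (.add (.add (.add (.add (.add (.add (.add (.add (.add (.add (.add (.add (.add (.add (.add (.add (.add (.add (.add (.add (.mul (.const (-2)) (.mul (.mul (.atom [i]) (.atom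 [j])) (.atom [k, l, m, n]))) (.mul (.const (1)) (.mul (.mul (.atom [i]) (.atom [j, k])) (.atom [l, m, n])))) (.mul (.const (1)) (.mul (.mul (.atom [i]) (.atom [j, k, l])) (.atom [m, n])))) (.mul (.const (-2)) (.mul (.mul (.atom [i]) (.atom [j, k, l, m])) (.atom [n])))) (.mul (.const (1)) (.mul (.mul (.atom []) (.atom [i])) (.atom [j, k, l, m, n])))) (.mul (.const (-2)) (.mul (.mul (.atom [i]) (.atom [j, k, l, n])) (.atom [m])))) (.mul (.const (1)) (.mul (.mul (.atom [i]) (.atom [j, k, m])) (.atom [l, n])))) (.mul (.const (-2)) (.mul (.mul (.atom [i]) (.atom [j, k, m, n])) (.atom [l])))) (.mul (.const (1)) (.mul (.mul (.atom [i]) (.atom [j, k, n])) (.atom [l, m])))) (.mul (.const (1)) (.mul (.mul (.atom [i]) (.atom [j, l])) (.atom [k, m, n])))) (.mul (.const (1)) (.mul (.mul (.atom [i]) (.atom [j, l, m])) (.atom [k, n])))) (.mul (.const (-2)) (.mul (.mul (.atom [i]) (.atom [j, l, m, n])) (.atom [k])))) (.mul (.const (1)) (.mul (.mul (.atom [i])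 (.atom [j, l, n])) (.atom [k, m])))) (.mul (.const (1)) (.mul (.mul (.atom [i]) (.atom [j, m])) (.atom [k, l, n])))) (.mul (.const (1)) (.mul (.mul (.atom [i]) (.atom [j, m, n])) (.atom [k, l])))) (.mul (.const (1)) (.mul (.mul (.atom [i]) (.atom [j, n])) (.atom [k, l, m])))) (.mul (.const (1)) (.mul (.mul (.atom [i, j]) (.atom [k])) (.atom [l, m, n])))) (.mul (.const (-2)) (.mul (.mul (.atom [i, j]) (.atom [k, l])) (.atom [m, n])))) (.mul (.const (1)) (.mul (.mul (.atom [i, j]) (.atom [k, l, m])) (.atom [n])))) (.mul (.const (1)) (.mul (.mul (.atom []) (.atom [i, j])) (.atom [k, l, m, n])))) (.mul (.const (1)) (.mul (.mul (.atom [i, j]) (.atom [k, l, n])) (.atom [m])))) (.mul (.const (-2)) (.mul (.mul (.atom [i, j]) (.atom [k, m])) (.atom [l, n])))) (.mul (.const (1)) (.mul (.mul (.atom [i, j]) (.atom [k, m, n])) (.atom [l])))) (.mul (.const (-2)) (.mul (.mul (.atom [i, j]) (.atom [k, n])) (.atom [l, m])))) (.mul (.const (1)) (.mul (.mul (.atom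 [i, j, k]) (.atom [l])) (.atom [m, n])))) (.mul (.const (1)) (.mul (.mul (.atom [i, j, k]) (.atom [l, m])) (.atom [n])))) (.mul (.const (-2)) (.mul (.mul (.atom []) (.atom [i, j, k])) (.atom [l, m, n])))) (.mul (.const (1)) (.mul (.mul (.atom [i, j, k]) (.atom [l, n])) (.atom [m])))) (.mul (.const (-2)) (.mul (.mul (.atom [i, j, k, l]) (.atom [m])) (.atom [n])))) (.mul (.const (1)) (.mul (.mul (.atom []) (.atom [i, j, k, l])) (.atom [m, n])))) (.mul (.const (1)) (.mul (.mul (.atom []) (.atom [i, j, k, l, m])) (.atom [n])))) (.mul (.const (-1)) (.mul (.mul (.atom []) (.atom [])) (.atom [i, j, k, l, m, n])))) (.mul (.const (1)) (.mul (.mul (.atom []) (.atom [i, j, k, l, n])) (.atom [m])))) (.mul (.const (-2)) (.mul (.mul (.atom [i, j, k, m]) (.atom [l])) (.atom [n])))) (.mul (.const (1)) (.mul (.mul (.atom []) (.atom [i, j, k, m])) (.atom [l, n])))) (.mul (.const (1)) (.mul (.mul (.atom []) (.atom [i, j, k, m, n])) (.atom [l])))) (.mul (.const (-2)) (.mul (.mul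 (.atom [i, j, k, n]) (.atom [l])) (.atom [m])))) (.mul (.const (1)) (.mul (.mul (.atom []) (.atom [i, j, k, n])) (.atom [l, m])))) (.mul (.const (1)) (.mul (.mul (.atom [i, j, l]) (.atom [k])) (.atom [m, n])))) (.mul (.const (1)) (.mul (.mul (.atom [i, j, l]) (.atom [k, m])) (.atom [n])))) (.mul (.const (-2)) (.mul (.mul (.atom []) (.atom [i, j, l])) (.atom [k, m, n])))) (.mul (.const (1)) (.mul (.mul (.atom [i, j, l]) (.atom [k, n])) (.atom [m])))) (.mul (.const (-2)) (.mul (.mul (.atom [i, j, l, m]) (.atom [k])) (.atom [n])))) (.mul (.const (1)) (.mul (.mul (.atom []) (.atom [i, j, l, m])) (.atom [k, n])))) (.mul (.const (1)) (.mul (.mul (.atom []) (.atom [i, j, l, m, n])) (.atom [k])))) (.mul (.const (-2)) (.mul (.mul (.atom [i, j, l, n]) (.atom [k])) (.atom [m])))) (.mul (.const (1)) (.mul (.mul (.atom []) (.atom [i, j, l, n])) (.atom [k, m])))) (.mul (.const (1)) (.mul (.mul (.atom [i, j, m]) (.atom [k])) (.atom [l, n])))) (.mul (.const (1)) (.mul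 (.mul (.atom [i, j, m]) (.atom [k, l])) (.atom [n])))) (.mul (.const (-2)) (.mul (.mul (.atom []) (.atom [i, j, m])) (.atom [k, l, n])))) (.mul (.const (1)) (.mul (.mul (.atom [i, j, m]) (.atom [k, n])) (.atom [l])))) (.mul (.const (-2)) (.mul (.mul (.atom [i, j, m, n]) (.atom [k])) (.atom [l])))) (.mul (.const (1)) (.mul (.mul (.atom []) (.atom [i, j, m, n])) (.atom [k, l])))) (.mul (.const (1)) (.mul (.mul (.atom [i, j, n]) (.atom [k])) (.atom [l, m])))) (.mul (.const (1)) (.mul (.mul (.atom [i, j, n]) (.atom [k, l])) (.atom [m])))) (.mul (.const (-2)) (.mul (.mul (.atom []) (.atom [i, j, n])) (.atom [k, l, m])))) (.mul (.const (1)) (.mul (.mul (.atom [i, j, n]) (.atom [k, m])) (.atom [l])))) (.mul (.const (1)) (.mul (.mul (.atom [i, k]) (.atom [j])) (.atom [l, m, n])))) (.mul (.const (-2)) (.mul (.mul (.atom [i, k]) (.atom [j, l])) (.atom [m, n])))) (.mul (.const (1)) (.mul (.mul (.atom [i, k]) (.atom [j, l, m])) (.atom [n])))) (.mul (.const (1))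 (.mul (.mul (.atom []) (.atom [i, k])) (.atom [j, l, m, n])))) (.mul (.const (1)) (.mul (.mul (.atom [i, k]) (.atom [j, l, n])) (.atom [m])))) (.mul (.const (-2)) (.mul (.mul (.atom [i, k]) (.atom [j, m])) (.atom [l, n])))) (.mul (.const (1)) (.mul (.mul (.atom [i, k]) (.atom [j, m, n])) (.atom [l])))) (.mul (.const (-2)) (.mul (.mul (.atom [i, k]) (.atom [j, n])) (.atom [l, m])))) (.mul (.const (1)) (.mul (.mul (.atom [i, k, l]) (.atom [j])) (.atom [m, n])))) (.mul (.const (1)) (.mul (.mul (.atom [i, k, l]) (.atom [j, m])) (.atom [n])))) (.mul (.const (-2)) (.mul (.mul (.atom []) (.atom [i, k, l])) (.atom [j, m, n])))) (.mul (.const (1)) (.mul (.mul (.atom [i, k, l]) (.atom [j, n])) (.atom [m])))) (.mul (.const (-2)) (.mul (.mul (.atom [i, k, l, m]) (.atom [j])) (.atom [n])))) (.mul (.const (1)) (.mul (.mul (.atom []) (.atom [i, k, l, m])) (.atom [j, n])))) (.mul (.const (1)) (.mul (.mul (.atom []) (.atom [i, k, l, m, n])) (.atom [j])))) (.mul (.const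 (-2)) (.mul (.mul (.atom [i, k, l, n]) (.atom [j])) (.atom [m])))) (.mul (.const (1)) (.mul (.mul (.atom []) (.atom [i, k, l, n])) (.atom [j, m])))) (.mul (.const (1)) (.mul (.mul (.atom [i, k, m]) (.atom [j])) (.atom [l, n])))) (.mul (.const (1)) (.mul (.mul (.atom [i, k, m]) (.atom [j, l])) (.atom [n])))) (.mul (.const (-2)) (.mul (.mul (.atom []) (.atom [i, k, m])) (.atom [j, l, n])))) (.mul (.const (1)) (.mul (.mul (.atom [i, k, m]) (.atom [j, n])) (.atom [l])))) (.mul (.const (-2)) (.mul (.mul (.atom [i, k, m, n]) (.atom [j])) (.atom [l])))) (.mul (.const (1)) (.mul (.mul (.atom []) (.atom [i, k, m, n])) (.atom [j, l])))) (.mul (.const (1)) (.mul (.mul (.atom [i, k, n]) (.atom [j])) (.atom [l, m])))) (.mul (.const (1)) (.mul (.mul (.atom [i, k, n]) (.atom [j, l])) (.atom [m])))) (.mul (.const (-2)) (.mul (.mul (.atom []) (.atom [i, k, n])) (.atom [j, l, m])))) (.mul (.const (1)) (.mul (.mul (.atom [i, k, n]) (.atom [j, m])) (.atom [l])))) (.mul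 (.const (1)) (.mul (.mul (.atom [i, l]) (.atom [j])) (.atom [k, m, n])))) (.mul (.const (-2)) (.mul (.mul (.atom [i, l]) (.atom [j, k])) (.atom [m, n])))) (.mul (.const (1)) (.mul (.mul (.atom [i, l]) (.atom [j, k, m])) (.atom [n])))) (.mul (.const (1)) (.mul (.mul (.atom []) (.atom [i, l])) (.atom [j, k, m, n])))) (.mul (.const (1)) (.mul (.mul (.atom [i, l]) (.atom [j, k, n])) (.atom [m])))) (.mul (.const (-2)) (.mul (.mul (.atom [i, l]) (.atom [j, m])) (.atom [k, n])))) (.mul (.const (1)) (.mul (.mul (.atom [i, l]) (.atom [j, m, n])) (.atom [k])))) (.mul (.const (-2)) (.mul (.mul (.atom [i, l]) (.atom [j, n])) (.atom [k, m])))) (.mul (.const (1)) (.mul (.mul (.atom [i, l, m]) (.atom [j])) (.atom [k, n])))) (.mul (.const (1)) (.mul (.mul (.atom [i, l, m]) (.atom [j, k])) (.atom [n])))) (.mul (.const (-2)) (.mul (.mul (.atom []) (.atom [i, l, m])) (.atom [j, k, n])))) (.mul (.const (1)) (.mul (.mul (.atom [i, l, m]) (.atom [j, n])) (.atom [k]))))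 (.mul (.const (-2)) (.mul (.mul (.atom [i, l, m, n]) (.atom [j])) (.atom [k])))) (.mul (.const (1)) (.mul (.mul (.atom []) (.atom [i, l, m, n])) (.atom [j, k])))) (.mul (.const (1)) (.mul (.mul (.atom [i, l, n]) (.atom [j])) (.atom [k, m])))) (.mul (.const (1)) (.mul (.mul (.atom [i, l, n]) (.atom [j, k])) (.atom [m])))) (.mul (.const (-2)) (.mul (.mul (.atom []) (.atom [i, l, n])) (.atom [j, k, m])))) (.mul (.const (1)) (.mul (.mul (.atom [i, l, n]) (.atom [j, m])) (.atom [k])))) (.mul (.const (1)) (.mul (.mul (.atom [i, m]) (.atom [j])) (.atom [k, l, n])))) (.mul (.const (-2)) (.mul (.mul (.atom [i, m]) (.atom [j, k])) (.atom [l, n])))) (.mul (.const (1)) (.mul (.mul (.atom [i, m]) (.atom [j, k, l])) (.atom [n])))) (.mul (.const (1)) (.mul (.mul (.atom []) (.atom [i, m])) (.atom [j, k, l, n])))) (.mul (.const (1)) (.mul (.mul (.atom [i, m]) (.atom [j, k, n])) (.atom [l])))) (.mul (.const (-2)) (.mul (.mul (.atom [i, m]) (.atom [j, l])) (.atom [k,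 n])))) (.mul (.const (1)) (.mul (.mul (.atom [i, m]) (.atom [j, l, n])) (.atom [k])))) (.mul (.const (-2)) (.mul (.mul (.atom [i, m]) (.atom [j, n])) (.atom [k, l])))) (.mul (.const (1)) (.mul (.mul (.atom [i, m, n]) (.atom [j])) (.atom [k, l])))) (.mul (.const (1)) (.mul (.mul (.atom [i, m, n]) (.atom [j, k])) (.atom [l])))) (.mul (.const (-2)) (.mul (.mul (.atom []) (.atom [i, m, n])) (.atom [j, k, l])))) (.mul (.const (1)) (.mul (.mul (.atom [i, m, n]) (.atom [j, l])) (.atom [k])))) (.mul (.const (1)) (.mul (.mul (.atom [i, n]) (.atom [j])) (.atom [k, l, m])))) (.mul (.const (-2)) (.mul (.mul (.atom [i, n]) (.atom [j, k])) (.atom [l, m])))) (.mul (.const (1)) (.mul (.mul (.atom [i, n]) (.atom [j, k, l])) (.atom [m])))) (.mul (.const (1)) (.mul (.mul (.atom []) (.atom [i, n])) (.atom [j, k, l, m])))) (.mul (.const (1)) (.mul (.mul (.atom [i, n]) (.atom [j, k, m])) (.atom [l])))) (.mul (.const (-2)) (.mul (.mul (.atom [i, n]) (.atom [j, l])) (.atom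 [k, m])))) (.mul (.const (1)) (.mul (.mul (.atom [i, n]) (.atom [j, l, m])) (.atom [k])))) (.mul (.const (-2)) (.mul (.mul (.atom [i, n]) (.atom [j, m])) (.atom [k, l]))))


lemma EP_ok {g : ℕ} (i j k l m n : Fin g) : (EP i j k l m n).ok := by
  simp [EP, EE.ok]

set_option maxHeartbeats 4000000 in
set_option maxRecDepth 100000 in
theorem statement6 {g : ℕ} (hg : 1 ≤ g) (i j k l m n : Fin g) :
    ∃ P : MvPolynomial {α : List (Fin g) // α.length ≤ 6} ℚ,
      ∀ σ : (Fin g → ℂ) → ℂ, ContDiff ℂ ⊤ σ → ∀ u : Fin g → ℂ, σ u ≠ 0 →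
        σ u ^ 3 * Sfun σ i j k l m n u
          = MvPolynomial.aeval (fun v : {α : List (Fin g) // α.length ≤ 6} =>
              pdIter v.1 σ u) P := by
  refine ⟨(EP i j k l m n).toPoly, ?_⟩
  intro σ hσ u₀ h0
  have hdσ : Differentiable ℂ σ := hσ.differentiable (by simp)
  set U : Set (Fin g → ℂ) := (fun u => σ u / σ u₀) ⁻¹' Complex.slitPlane with hUdef
  have hUopen : IsOpen U :=
    Complex.isOpen_slitPlane.preimage (hdσ.continuous.div_const _)
  have hu₀ : u₀ ∈ U := by
    simp [hUdef, Set.mem_preimage, div_self h0]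
  have hσne : ∀ u ∈ U, σ u ≠ 0 := by
    intro u hu
    have h1 : σ u / σ u₀ ≠ 0 := Complex.slitPlane_ne_zero hu
    intro hz; rw [hz] at h1; simp at h1
  set f : (Fin g → ℂ) → ℂ := fun u => Complex.log (σ u / σ u₀) with hfdef
  have hf : ∀ u ∈ U, ContDiffAt ℂ ⊤ f u := by
    intro u hu
    exact (Complex.contDiffAt_log hu).comp u ((hσ.contDiffAt).div_const _)
  have hlog : ∀ (a : Fin g), ∀ u ∈ U, σ u * pd a f u = pd a σ u := by
    intro a u hu
    have h1 : HasFDerivAt (fun v => σ v / σ u₀) ((σ u₀)⁻¹ • fderiv ℂ σ u) u := by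
      simpa [div_eq_mul_inv, smul_smul, mul_comm] using
        ((hdσ u).hasFDerivAt.mul_const (σ u₀)⁻¹)
    have h2 := (Complex.hasDerivAt_log hu).comp_hasFDerivAt u h1
    have h3 : pd a f u = (σ u / σ u₀)⁻¹ * ((σ u₀)⁻¹ * pd a σ u) := by
      have := h2.fderiv
      simp only [hfdef, pd, Function.comp_def] at this ⊢
      rw [this]
      simp [pd]
    rw [h3]
    field_simp [hσne u hu]
  have hwp := wp_spec hσ hUopen hσne hf hlog
  have hcum := cum_spec hσ hUopen hσne hf hlog
  have hok := EP_ok i j k l m n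
  rw [aeval_toPoly σ u₀ _ hok]
  have hwA := hwp i j [k, l, m, n] u₀ hu₀
  have hcA : σ u₀ ^ 6 * pdIter [i, j, k, l, m, n] f u₀
      = (cum [n, m, l, k, j, i]).eval σ u₀ := by
    simpa using hcum [n, m, l, k, j, i] (by simp) u₀ hu₀
  have hdA : pdIter [i, j, k, l, m, n] f u₀
      = (cum [n, m, l, k, j, i]).eval σ u₀ / σ u₀ ^ 6 := by
    rw [eq_div_iff (pow_ne_zero 6 h0)]; linear_combination hcA
  have hw0 := hwp i j [k] u₀ hu₀
  have hc0 : σ u₀ ^ 3 * pdIter [i, j, k] f u₀ = (cum [k, j, i]).eval σ u₀ := by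
    simpa using hcum [k, j, i] (by simp) u₀ hu₀
  have hd0 : pdIter [i, j, k] f u₀ = (cum [k, j, i]).eval σ u₀ / σ u₀ ^ 3 := by
    rw [eq_div_iff (pow_ne_zero 3 h0)]; linear_combination hc0
  have hw1 := hwp l m [n] u₀ hu₀
  have hc1 : σ u₀ ^ 3 * pdIter [l, m, n] f u₀ = (cum [n, m, l]).eval σ u₀ := by
    simpa using hcum [n, m, l] (by simp) u₀ hu₀
  have hd1 : pdIter [l, m, n] f u₀ = (cum [n, m, l]).eval σ u₀ / σ u₀ ^ 3 := by
    rw [eq_div_iff (pow_ne_zero 3 h0)]; linear_combination hc1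
  have hw2 := hwp i j [l] u₀ hu₀
  have hc2 : σ u₀ ^ 3 * pdIter [i, j, l] f u₀ = (cum [l, j, i]).eval σ u₀ := by
    simpa using hcum [l, j, i] (by simp) u₀ hu₀
  have hd2 : pdIter [i, j, l] f u₀ = (cum [l, j, i]).eval σ u₀ / σ u₀ ^ 3 := by
    rw [eq_div_iff (pow_ne_zero 3 h0)]; linear_combination hc2
  have hw3 := hwp k m [n] u₀ hu₀
  have hc3 : σ u₀ ^ 3 * pdIter [k, m, n] f u₀ = (cum [n, m, k]).eval σ u₀ := by
    simpa using hcum [n, m, k] (by simp) u₀ hu₀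
  have hd3 : pdIter [k, m, n] f u₀ = (cum [n, m, k]).eval σ u₀ / σ u₀ ^ 3 := by
    rw [eq_div_iff (pow_ne_zero 3 h0)]; linear_combination hc3
  have hw4 := hwp i j [m] u₀ hu₀
  have hc4 : σ u₀ ^ 3 * pdIter [i, j, m] f u₀ = (cum [m, j, i]).eval σ u₀ := by
    simpa using hcum [m, j, i] (by simp) u₀ hu₀
  have hd4 : pdIter [i, j, m] f u₀ = (cum [m, j, i]).eval σ u₀ / σ u₀ ^ 3 := by
    rw [eq_div_iff (pow_ne_zero 3 h0)]; linear_combination hc4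
  have hw5 := hwp k l [n] u₀ hu₀
  have hc5 : σ u₀ ^ 3 * pdIter [k, l, n] f u₀ = (cum [n, l, k]).eval σ u₀ := by
    simpa using hcum [n, l, k] (by simp) u₀ hu₀
  have hd5 : pdIter [k, l, n] f u₀ = (cum [n, l, k]).eval σ u₀ / σ u₀ ^ 3 := by
    rw [eq_div_iff (pow_ne_zero 3 h0)]; linear_combination hc5
  have hw6 := hwp i j [n] u₀ hu₀
  have hc6 : σ u₀ ^ 3 * pdIter [i, j, n] f u₀ = (cum [n, j, i]).eval σ u₀ := by
    simpa using hcum [n, j, i] (by simp) u₀ hu₀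
  have hd6 : pdIter [i, j, n] f u₀ = (cum [n, j, i]).eval σ u₀ / σ u₀ ^ 3 := by
    rw [eq_div_iff (pow_ne_zero 3 h0)]; linear_combination hc6
  have hw7 := hwp k l [m] u₀ hu₀
  have hc7 : σ u₀ ^ 3 * pdIter [k, l, m] f u₀ = (cum [m, l, k]).eval σ u₀ := by
    simpa using hcum [m, l, k] (by simp) u₀ hu₀
  have hd7 : pdIter [k, l, m] f u₀ = (cum [m, l, k]).eval σ u₀ / σ u₀ ^ 3 := by
    rw [eq_div_iff (pow_ne_zero 3 h0)]; linear_combination hc7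
  have hw8 := hwp i k [l] u₀ hu₀
  have hc8 : σ u₀ ^ 3 * pdIter [i, k, l] f u₀ = (cum [l, k, i]).eval σ u₀ := by
    simpa using hcum [l, k, i] (by simp) u₀ hu₀
  have hd8 : pdIter [i, k, l] f u₀ = (cum [l, k, i]).eval σ u₀ / σ u₀ ^ 3 := by
    rw [eq_div_iff (pow_ne_zero 3 h0)]; linear_combination hc8
  have hw9 := hwp j m [n] u₀ hu₀
  have hc9 : σ u₀ ^ 3 * pdIter [j, m, n] f u₀ = (cum [n, m, j]).eval σ u₀ := by
    simpa using hcum [n, m, j] (by simp) u₀ hu₀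
  have hd9 : pdIter [j, m, n] f u₀ = (cum [n, m, j]).eval σ u₀ / σ u₀ ^ 3 := by
    rw [eq_div_iff (pow_ne_zero 3 h0)]; linear_combination hc9
  have hw10 := hwp i k [m] u₀ hu₀
  have hc10 : σ u₀ ^ 3 * pdIter [i, k, m] f u₀ = (cum [m, k, i]).eval σ u₀ := by
    simpa using hcum [m, k, i] (by simp) u₀ hu₀
  have hd10 : pdIter [i, k, m] f u₀ = (cum [m, k, i]).eval σ u₀ / σ u₀ ^ 3 := by
    rw [eq_div_iff (pow_ne_zero 3 h0)]; linear_combination hc10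
  have hw11 := hwp j l [n] u₀ hu₀
  have hc11 : σ u₀ ^ 3 * pdIter [j, l, n] f u₀ = (cum [n, l, j]).eval σ u₀ := by
    simpa using hcum [n, l, j] (by simp) u₀ hu₀
  have hd11 : pdIter [j, l, n] f u₀ = (cum [n, l, j]).eval σ u₀ / σ u₀ ^ 3 := by
    rw [eq_div_iff (pow_ne_zero 3 h0)]; linear_combination hc11
  have hw12 := hwp i k [n] u₀ hu₀
  have hc12 : σ u₀ ^ 3 * pdIter [i, k, n] f u₀ = (cum [n, k, i]).eval σ u₀ := by
    simpa using hcum [n, k, i] (by simp) u₀ hu₀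
  have hd12 : pdIter [i, k, n] f u₀ = (cum [n, k, i]).eval σ u₀ / σ u₀ ^ 3 := by
    rw [eq_div_iff (pow_ne_zero 3 h0)]; linear_combination hc12
  have hw13 := hwp j l [m] u₀ hu₀
  have hc13 : σ u₀ ^ 3 * pdIter [j, l, m] f u₀ = (cum [m, l, j]).eval σ u₀ := by
    simpa using hcum [m, l, j] (by simp) u₀ hu₀
  have hd13 : pdIter [j, l, m] f u₀ = (cum [m, l, j]).eval σ u₀ / σ u₀ ^ 3 := by
    rw [eq_div_iff (pow_ne_zero 3 h0)]; linear_combination hc13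
  have hw14 := hwp i l [m] u₀ hu₀
  have hc14 : σ u₀ ^ 3 * pdIter [i, l, m] f u₀ = (cum [m, l, i]).eval σ u₀ := by
    simpa using hcum [m, l, i] (by simp) u₀ hu₀
  have hd14 : pdIter [i, l, m] f u₀ = (cum [m, l, i]).eval σ u₀ / σ u₀ ^ 3 := by
    rw [eq_div_iff (pow_ne_zero 3 h0)]; linear_combination hc14
  have hw15 := hwp j k [n] u₀ hu₀
  have hc15 : σ u₀ ^ 3 * pdIter [j, k, n] f u₀ = (cum [n, k, j]).eval σ u₀ := by
    simpa using hcum [n, k, j] (by simp) u₀ hu₀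
  have hd15 : pdIter [j, k, n] f u₀ = (cum [n, k, j]).eval σ u₀ / σ u₀ ^ 3 := by
    rw [eq_div_iff (pow_ne_zero 3 h0)]; linear_combination hc15
  have hw16 := hwp i l [n] u₀ hu₀
  have hc16 : σ u₀ ^ 3 * pdIter [i, l, n] f u₀ = (cum [n, l, i]).eval σ u₀ := by
    simpa using hcum [n, l, i] (by simp) u₀ hu₀
  have hd16 : pdIter [i, l, n] f u₀ = (cum [n, l, i]).eval σ u₀ / σ u₀ ^ 3 := by
    rw [eq_div_iff (pow_ne_zero 3 h0)]; linear_combination hc16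
  have hw17 := hwp j k [m] u₀ hu₀
  have hc17 : σ u₀ ^ 3 * pdIter [j, k, m] f u₀ = (cum [m, k, j]).eval σ u₀ := by
    simpa using hcum [m, k, j] (by simp) u₀ hu₀
  have hd17 : pdIter [j, k, m] f u₀ = (cum [m, k, j]).eval σ u₀ / σ u₀ ^ 3 := by
    rw [eq_div_iff (pow_ne_zero 3 h0)]; linear_combination hc17
  have hw18 := hwp i m [n] u₀ hu₀
  have hc18 : σ u₀ ^ 3 * pdIter [i, m, n] f u₀ = (cum [n, m, i]).eval σ u₀ := by
    simpa using hcum [n, m, i] (by simp) u₀ hu₀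
  have hd18 : pdIter [i, m, n] f u₀ = (cum [n, m, i]).eval σ u₀ / σ u₀ ^ 3 := by
    rw [eq_div_iff (pow_ne_zero 3 h0)]; linear_combination hc18
  have hw19 := hwp j k [l] u₀ hu₀
  have hc19 : σ u₀ ^ 3 * pdIter [j, k, l] f u₀ = (cum [l, k, j]).eval σ u₀ := by
    simpa using hcum [l, k, j] (by simp) u₀ hu₀
  have hd19 : pdIter [j, k, l] f u₀ = (cum [l, k, j]).eval σ u₀ / σ u₀ ^ 3 := by
    rw [eq_div_iff (pow_ne_zero 3 h0)]; linear_combination hc19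
  simp only [Sfun]
  rw [hwA, hw0, hw1, hw2, hw3, hw4, hw5, hw6, hw7, hw8, hw9, hw10, hw11, hw12, hw13, hw14, hw15, hw16, hw17, hw18, hw19]
  rw [hdA, hd0, hd1, hd2, hd3, hd4, hd5, hd6, hd7, hd8, hd9, hd10, hd11, hd12, hd13, hd14, hd15, hd16, hd17, hd18, hd19]
  field_simp
  simp only [cum, EE.D, EE.eval, EP, List.cons_append, List.nil_append,
    List.singleton_append, List.length_cons, List.length_nil, pdIter_nil]
  push_cast
  ring
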